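/- Let a₁,…,a_m ∈ ℝⁿ be not collinear and define R_k = Σ_{i≠k} (aᵢ - a_k)/‖aᵢ - a_k‖. The vertex a_k is the optimal solution of minimizing φ(x) = Σᵢ ‖x - aᵢ‖ if and only if ‖R_k‖ ≤ 1. -/

import Mathlib

open Finset

local notation "⟪" x ", " y "⟫" => @inner ℝ _ _ x y

lemma hasDerivAt_norm_add_smul {E : Type*} [NormedAddCommGroup E] [InnerProductSpace ℝ E]
    (y d : E) (hy : y ≠ 0) :
    HasDerivAt (fun t : ℝ => ‖y + t • d‖) (⟪y, d⟫ / ‖y‖) 0 := by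
  have hq : HasDerivAt (fun t : ℝ => ‖y‖ ^ 2 + 2 * ⟪y, d⟫ * t + ‖d‖ ^ 2 * t ^ 2)
      (2 * ⟪y, d⟫) 0 := by
    have h1 : HasDerivAt (fun t : ℝ => ‖y‖ ^ 2 + 2 * ⟪y, d⟫ * t + ‖d‖ ^ 2 * t ^ 2)
        (0 + 2 * ⟪y, d⟫ * 1 + ‖d‖ ^ 2 * (2 * 0 ^ 1)) 0 := by
      exact ((hasDerivAt_const (0:ℝ) _).add ((hasDerivAt_id (0:ℝ)).const_mul _)).add
        ((hasDerivAt_pow 2 (0:ℝ)).const_mul _)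
    simpa using h1
  have hq0 : (‖y‖ ^ 2 + 2 * ⟪y, d⟫ * (0:ℝ) + ‖d‖ ^ 2 * (0:ℝ) ^ 2) ≠ 0 := by
    simp [pow_eq_zero_iff, norm_eq_zero, hy]
  have hs := hq.sqrt hq0
  have heq : (fun t : ℝ => Real.sqrt (‖y‖ ^ 2 + 2 * ⟪y, d⟫ * t + ‖d‖ ^ 2 * t ^ 2))
      = fun t : ℝ => ‖y + t • d‖ := by
    funext t
    have : ⟪y + t • d, y + t • d⟫ = ‖y‖ ^ 2 + 2 * ⟪y, d⟫ * t + ‖d‖ ^ 2 * t ^ 2 := by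
      rw [real_inner_add_add_self, real_inner_smul_right, real_inner_smul_left,
        real_inner_smul_right, real_inner_self_eq_norm_sq, real_inner_self_eq_norm_sq]
      ring
    rw [← this, norm_eq_sqrt_real_inner]
  rw [heq] at hs
  have : Real.sqrt (‖y‖ ^ 2 + 2 * ⟪y, d⟫ * (0:ℝ) + ‖d‖ ^ 2 * (0:ℝ) ^ 2) = ‖y‖ := by
    have h0 : ‖y‖ ^ 2 + 2 * ⟪y, d⟫ * (0:ℝ) + ‖d‖ ^ 2 * (0:ℝ) ^ 2 = ‖y‖ ^ 2 := by ring
    rw [h0, Real.sqrt_sq (norm_nonneg y)]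
  rw [this] at hs
  convert hs using 1
  rw [mul_div_mul_left _ _ (by norm_num : (2:ℝ) ≠ 0)]

theorem stmt_17 (n m : ℕ) (a : Fin m → EuclideanSpace ℝ (Fin n))
    (hcol : ¬ Collinear ℝ (Set.range a))
    (hdist : Function.Injective a) (k : Fin m) :
    (∀ x, ∑ i, ‖a k - a i‖ ≤ ∑ i, ‖x - a i‖) ↔
      ‖∑ i ∈ Finset.univ.erase k, ‖a i - a k‖⁻¹ • (a i - a k)‖ ≤ 1 := by
  set R : EuclideanSpace ℝ (Fin n) := ∑ i ∈ Finset.univ.erase k, ‖a i - a k‖⁻¹ • (a i - a k)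
    with hR
  have hne : ∀ i ∈ Finset.univ.erase k, a i - a k ≠ 0 := by
    intro i hi
    have : a i ≠ a k := fun h => (Finset.mem_erase.mp hi).1 (hdist h)
    exact sub_ne_zero.mpr this
  constructor
  · -- forward: optimality implies ‖R‖ ≤ 1
    intro hopt
    by_cases hR0 : R = 0
    · simp [hR0]
    · set d : EuclideanSpace ℝ (Fin n) := ‖R‖⁻¹ • R with hd
      have hRn : (0:ℝ) < ‖R‖ := norm_pos_iff.mpr hR0
      have hdnorm : ‖d‖ = 1 := by
        rw [hd, norm_smul, norm_inv, norm_norm, inv_mul_cancel₀ hRn.ne']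
      -- g(t) = sum over i ≠ k of ‖a k + t • d - a i‖
      set g : ℝ → ℝ := fun t => ∑ i ∈ Finset.univ.erase k, ‖(a k - a i) + t • d‖ with hg
      have hderiv : HasDerivAt g (∑ i ∈ Finset.univ.erase k, ⟪a k - a i, d⟫ / ‖a k - a i‖) 0 :=
        HasDerivAt.fun_sum fun i hi =>
          hasDerivAt_norm_add_smul _ d (by simpa [neg_sub] using neg_ne_zero.mpr (hne i hi))
      have hcval : (∑ i ∈ Finset.univ.erase k, ⟪a k - a i, d⟫ / ‖a k - a i‖) = -‖R‖ := by
        have : (∑ i ∈ Finset.univ.erase k, ⟪a k - a i, d⟫ / ‖a k - a i‖) = -⟪R, d⟫ := by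
          rw [hR, sum_inner, ← Finset.sum_neg_distrib]
          refine Finset.sum_congr rfl fun i hi => ?_
          rw [real_inner_smul_left]
          have h1 : ⟪a k - a i, d⟫ = -⟪a i - a k, d⟫ := by
            rw [← inner_neg_left]; congr 1; abel
          rw [h1, norm_sub_rev (a k)]
          field_simp
        rw [this, hd, real_inner_smul_right, real_inner_self_eq_norm_sq]
        field_simp
      rw [hcval] at hderiv
      -- for t > 0, slope of g at 0 is ≥ -1
      have key : ∀ t : ℝ, 0 < t → g 0 - t ≤ g t := by
        intro t ht
        have := hopt (a k + t • d)
        have hsum1 : ∑ i, ‖a k + t • d - a i‖ = t + g t := by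
          rw [← Finset.add_sum_erase _ _ (Finset.mem_univ k)]
          congr 1
          · simp [norm_smul, abs_of_pos ht, hdnorm]
          · exact Finset.sum_congr rfl fun i _ => by congr 1; abel
        have hsum2 : ∑ i, ‖a k - a i‖ = g 0 := by
          rw [← Finset.add_sum_erase _ _ (Finset.mem_univ k)]
          simp [hg]
        rw [hsum1, hsum2] at this
        linarith
      have hslope : Filter.Tendsto (fun t => (g t - g 0) / t) (nhdsWithin 0 (Set.Ioi 0))
          (nhds (-‖R‖)) := by
        have := hderiv.hasDerivWithinAt (s := Set.Ioi 0)
        rw [hasDerivWithinAt_iff_tendsto_slope] at this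
        have hsub : nhdsWithin (0:ℝ) (Set.Ioi 0) ≤ nhdsWithin 0 (Set.Ioi 0 \ {0}) := by
          apply nhdsWithin_mono
          intro x hx
          exact ⟨hx, ne_of_gt hx⟩
        refine (this.mono_left hsub).congr fun t => ?_
        simp [slope_def_field, div_eq_inv_mul]
      have hge : -‖R‖ ≥ -1 := by
        refine ge_of_tendsto hslope ?_
        filter_upwards [self_mem_nhdsWithin] with t ht
        have ht' : (0:ℝ) < t := ht
        have hk := key t ht'
        rw [le_div_iff₀ ht']
        linarith
      linarith
  · -- reverse: ‖R‖ ≤ 1 implies optimality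
    intro hRle x
    have key : ∀ i ∈ Finset.univ.erase k,
        ‖a k - a i‖ - ⟪‖a i - a k‖⁻¹ • (a i - a k), x - a k⟫ ≤ ‖x - a i‖ := by
      intro i hi
      have hni : a i - a k ≠ 0 := hne i hi
      have hnn : (0:ℝ) < ‖a i - a k‖ := norm_pos_iff.mpr hni
      set u : EuclideanSpace ℝ (Fin n) := ‖a i - a k‖⁻¹ • (a k - a i) with hu
      have hun : ‖u‖ = 1 := by
        rw [hu, norm_smul, norm_inv, norm_norm, norm_sub_rev (a k)]
        exact inv_mul_cancel₀ hnn.ne'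
      have hcs : ⟪u, x - a i⟫ ≤ ‖x - a i‖ := by
        calc ⟪u, x - a i⟫ ≤ ‖u‖ * ‖x - a i‖ := real_inner_le_norm _ _
          _ = ‖x - a i‖ := by rw [hun, one_mul]
      have hsplit : ⟪u, x - a i⟫ = ‖a k - a i‖ + ⟪u, x - a k⟫ := by
        have : (x : EuclideanSpace ℝ (Fin n)) - a i = (a k - a i) + (x - a k) := by abel
        rw [this, inner_add_right, hu, real_inner_smul_left, real_inner_self_eq_norm_sq,
          norm_sub_rev (a i)]
        have h2 : ‖a k - a i‖ ≠ 0 := by rw [norm_sub_rev]; exact hnn.ne'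
        field_simp
      have hneg : ⟪u, x - a k⟫ = -⟪‖a i - a k‖⁻¹ • (a i - a k), x - a k⟫ := by
        rw [hu, ← inner_neg_left]
        congr 1
        rw [← smul_neg]
        congr 1
        abel
      nlinarith [hcs, hsplit, hneg]
    have hsum : ∑ i ∈ Finset.univ.erase k, ‖a k - a i‖ - ⟪R, x - a k⟫
        ≤ ∑ i ∈ Finset.univ.erase k, ‖x - a i‖ := by
      rw [hR, sum_inner, ← Finset.sum_sub_distrib]
      exact Finset.sum_le_sum key
    have hcs2 : ⟪R, x - a k⟫ ≤ ‖x - a k‖ := by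
      calc ⟪R, x - a k⟫ ≤ ‖R‖ * ‖x - a k‖ := real_inner_le_norm _ _
        _ ≤ 1 * ‖x - a k‖ := by
            exact mul_le_mul_of_nonneg_right hRle (norm_nonneg _)
        _ = ‖x - a k‖ := one_mul _
    rw [← Finset.add_sum_erase _ _ (Finset.mem_univ k),
      ← Finset.add_sum_erase _ (fun i => ‖x - a i‖) (Finset.mem_univ k)]
    simp only [sub_self, norm_zero, zero_add]
    linarith
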